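/- Let Y be a hereditarily indecomposable complex Banach space, W a Banach space, S : Y → W a bounded linear operator, and Z an infinite-dimensional closed subspace of Y. If the restriction of S to Z is strictly singular, then S is strictly singular. -/

import Mathlib

open Filter Topology

noncomputable section

variable {E F : Type*}

def IsInfDimClosed [NormedAddCommGroup E] [NormedSpace ℂ E] (M : Submodule ℂ E) : Prop :=
  IsClosed (M : Set E) ∧ ¬ FiniteDimensional ℂ M

def HI (E : Type*) [NormedAddCommGroup E] [NormedSpace ℂ E] : Prop :=
  ∀ M N : Submodule ℂ E, IsInfDimClosed M → IsInfDimClosed N → ∀ ε > 0,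
    ∃ u ∈ M, ∃ v ∈ N, ‖u‖ = 1 ∧ ‖v‖ = 1 ∧ ‖u - v‖ ≤ ε

def StrictlySingular [NormedAddCommGroup E] [NormedSpace ℂ E]
    [NormedAddCommGroup F] [NormedSpace ℂ F] (S : E →L[ℂ] F) : Prop :=
  ∀ M : Submodule ℂ E, IsInfDimClosed M → ∀ c > 0, ∃ x ∈ M, ‖S x‖ < c * ‖x‖

def IsNBasic2 [NormedAddCommGroup E] [NormedSpace ℂ E] (y : ℕ → E) : Prop :=
  (∀ i, ‖y i‖ = 1) ∧ ∀ (a : ℕ → ℂ) (m n : ℕ), m ≤ n →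
    ‖∑ i ∈ Finset.range m, a i • y i‖ ≤ 2 * ‖∑ i ∈ Finset.range n, a i • y i‖

def IsBlockOf [NormedAddCommGroup E] [NormedSpace ℂ E] (w z : ℕ → E) : Prop :=
  ∃ (a : ℕ → ℂ) (F : ℕ → Finset ℕ), (∀ k, (F k).Nonempty) ∧
    (∀ k i j, i ∈ F k → j ∈ F (k+1) → i < j) ∧
    (∀ k, w k = ∑ i ∈ F k, a i • z i) ∧ (∀ k, w k ≠ 0)

def IsNBlockOf [NormedAddCommGroup E] [NormedSpace ℂ E] (w z : ℕ → E) : Prop :=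
  IsBlockOf w z ∧ ∀ k, ‖w k‖ = 1

def cSpan [NormedAddCommGroup E] [NormedSpace ℂ E] (y : ℕ → E) : Submodule ℂ E :=
  (Submodule.span ℂ (Set.range y)).topologicalClosure

def tailSpan [NormedAddCommGroup E] [NormedSpace ℂ E] (y : ℕ → E) (k : ℕ) : Submodule ℂ E :=
  cSpan (fun i => y (i + k))

theorem mem_cSpan [NormedAddCommGroup E] [NormedSpace ℂ E] (y : ℕ → E) (i : ℕ) :
    y i ∈ cSpan y :=
  (Submodule.span ℂ (Set.range y)).le_topologicalClosure (Submodule.subset_span ⟨i, rfl⟩)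

theorem tailSpan_le [NormedAddCommGroup E] [NormedSpace ℂ E] (y : ℕ → E) (k : ℕ) :
    tailSpan y k ≤ cSpan y :=
  Submodule.topologicalClosure_mono (Submodule.span_mono (by rintro _ ⟨i, rfl⟩; exact ⟨i + k, rfl⟩))

def inclCLM [NormedAddCommGroup E] [NormedSpace ℂ E] {M N : Submodule ℂ E} (h : M ≤ N) :
    M →L[ℂ] N :=
  LinearMap.mkContinuous (Submodule.inclusion h) 1 (by
    intro x
    simp [Submodule.inclusion])

namespace SS0

open Metric

variable {Y : Type*} [NormedAddCommGroup Y] [NormedSpace ℂ Y]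

theorem infdim_inf_ker (V : Submodule ℂ Y) (hV : ¬ FiniteDimensional ℂ V) (f : Y →L[ℂ] ℂ) :
    ¬ FiniteDimensional ℂ ↥(V ⊓ LinearMap.ker (f : Y →ₗ[ℂ] ℂ)) := by
  intro hfin
  apply hV
  set φ : V →ₗ[ℂ] ℂ := f.toLinearMap.comp V.subtype with hφ
  have hker : LinearMap.ker φ = (V ⊓ LinearMap.ker (f : Y →ₗ[ℂ] ℂ)).comap V.subtype := by
    ext x
    simp only [LinearMap.mem_ker, hφ, LinearMap.coe_comp, Function.comp_apply,
      Submodule.mem_comap, Submodule.mem_inf, Submodule.coe_subtype,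
      ContinuousLinearMap.coe_coe]
    exact ⟨fun h => ⟨x.2, h⟩, fun h => h.2⟩
  have h1 : FiniteDimensional ℂ ↥(LinearMap.ker φ) := by
    rw [hker]
    exact (Submodule.comapSubtypeEquivOfLe (inf_le_left :
      V ⊓ LinearMap.ker (f : Y →ₗ[ℂ] ℂ) ≤ V)).symm.finiteDimensional
  have h2 := LinearMap.lift_rank_range_add_rank_ker φ
  have hlt : Cardinal.lift.{0} (Module.rank ℂ ↥V) < Cardinal.aleph0 := by
    rw [← h2]
    exact Cardinal.add_lt_aleph0
      (Cardinal.lift_lt_aleph0.2 (Module.rank_lt_aleph0_iff.2 inferInstance))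
      (Cardinal.lift_lt_aleph0.2 (Module.rank_lt_aleph0_iff.2 inferInstance))
  exact Module.rank_lt_aleph0_iff.1 (Cardinal.lift_lt_aleph0.1 hlt)

theorem infdim_inf_kers {ι : Type*} (V : Submodule ℂ Y) (hV : ¬ FiniteDimensional ℂ V)
    (hVc : IsClosed (V : Set Y)) (s : Finset ι) (g : ι → Y →L[ℂ] ℂ) :
    ¬ FiniteDimensional ℂ ↥(V ⊓ s.inf fun i => LinearMap.ker (g i : Y →ₗ[ℂ] ℂ)) ∧
      IsClosed ((↑(V ⊓ s.inf fun i => LinearMap.ker (g i : Y →ₗ[ℂ] ℂ)) : Set Y)) := by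
  classical
  induction s using Finset.induction_on with
  | empty => rw [Finset.inf_empty, inf_top_eq]; exact ⟨hV, hVc⟩
  | @insert a s ha ih =>
    have heq : V ⊓ (insert a s).inf (fun i => LinearMap.ker (g i : Y →ₗ[ℂ] ℂ)) =
        (V ⊓ s.inf fun i => LinearMap.ker (g i : Y →ₗ[ℂ] ℂ)) ⊓ LinearMap.ker (g a : Y →ₗ[ℂ] ℂ) := by
      rw [Finset.inf_insert, inf_comm (LinearMap.ker (g a : Y →ₗ[ℂ] ℂ)) _, ← inf_assoc]
    rw [heq]
    refine ⟨infdim_inf_ker _ ih.1 (g a), ?_⟩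
    rw [Submodule.coe_inf]
    exact ih.2.inter (ContinuousLinearMap.isClosed_ker (g a))


theorem exists_functional (E : Submodule ℂ Y) (hE : IsClosed (E : Set Y)) (z : Y) {ρ : ℝ}
    (hρ : 0 < ρ) (hd : ∀ e ∈ E, ρ ≤ ‖z - e‖) :
    ∃ f : Y →L[ℂ] ℂ, f z = 1 ∧ (∀ e ∈ E, f e = 0) ∧ ‖f‖ ≤ ρ⁻¹ := by
  haveI : IsClosed (E : Set Y) := hE
  have hlow : ρ ≤ ‖(Submodule.Quotient.mk z : Y ⧸ E)‖ := by
    by_contra hcon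
    push_neg at hcon
    obtain ⟨m, hm, hmn⟩ := Submodule.Quotient.norm_mk_lt
      (Submodule.Quotient.mk z : Y ⧸ E) (sub_pos.2 hcon)
    have hmem : z - m ∈ E := by
      have := (Submodule.Quotient.eq E).1 hm
      simpa using neg_mem this
    have h2 := hd (z - m) hmem
    simp only [sub_sub_cancel] at h2
    linarith
  have hz0 : (Submodule.Quotient.mk z : Y ⧸ E) ≠ 0 := by
    intro h
    rw [h, norm_zero] at hlow
    linarith
  obtain ⟨g, hg1, hg2⟩ := exists_dual_vector ℂ (Submodule.Quotient.mk z : Y ⧸ E) (norm_ne_zero_iff.2 hz0)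
  set nz : ℝ := ‖(Submodule.Quotient.mk z : Y ⧸ E)‖ with hnz
  have hnzpos : 0 < nz := lt_of_lt_of_le hρ hlow
  set L : Y →ₗ[ℂ] ℂ := ((nz : ℂ)⁻¹) • (g.toLinearMap.comp (E.mkQ)) with hL
  have hbound : ∀ y : Y, ‖L y‖ ≤ ρ⁻¹ * ‖y‖ := by
    intro y
    have h1 : ‖g (Submodule.Quotient.mk y)‖ ≤ ‖(Submodule.Quotient.mk y : Y ⧸ E)‖ := by
      calc ‖g (Submodule.Quotient.mk y)‖ ≤ ‖g‖ * ‖(Submodule.Quotient.mk y : Y ⧸ E)‖ :=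
            g.le_opNorm _
        _ = ‖(Submodule.Quotient.mk y : Y ⧸ E)‖ := by rw [hg1, one_mul]
    have h2 : ‖(Submodule.Quotient.mk y : Y ⧸ E)‖ ≤ ‖y‖ := Submodule.Quotient.norm_mk_le E y
    have h3 : ‖L y‖ = nz⁻¹ * ‖g (Submodule.Quotient.mk y)‖ := by
      rw [hL]
      simp only [LinearMap.smul_apply, LinearMap.coe_comp, Function.comp_apply,
        ContinuousLinearMap.coe_coe, Submodule.mkQ_apply, norm_smul, norm_inv,
        Complex.norm_real]
      rw [Real.norm_eq_abs, abs_of_pos hnzpos]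
    rw [h3]
    have h4 : nz⁻¹ ≤ ρ⁻¹ := inv_anti₀ hρ hlow
    have h5 : nz⁻¹ * ‖g (Submodule.Quotient.mk y)‖ ≤ nz⁻¹ * ‖y‖ :=
      mul_le_mul_of_nonneg_left (h1.trans h2) (le_of_lt (inv_pos.2 hnzpos))
    exact h5.trans (mul_le_mul_of_nonneg_right h4 (norm_nonneg _))
  refine ⟨LinearMap.mkContinuous L ρ⁻¹ hbound, ?_, ?_, ?_⟩
  · show L z = 1
    rw [hL]
    simp only [LinearMap.smul_apply, LinearMap.coe_comp, Function.comp_apply,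
      ContinuousLinearMap.coe_coe, Submodule.mkQ_apply]
    rw [hg2, smul_eq_mul]
    exact inv_mul_cancel₀ (by exact_mod_cast ne_of_gt hnzpos)
  · intro e he
    show L e = 0
    rw [hL]
    simp only [LinearMap.smul_apply, LinearMap.coe_comp, Function.comp_apply,
      ContinuousLinearMap.coe_coe, Submodule.mkQ_apply]
    rw [show (Submodule.Quotient.mk e : Y ⧸ E) = 0 from (Submodule.Quotient.mk_eq_zero E).2 he]
    simp
  · exact LinearMap.mkContinuous_norm_le L (le_of_lt (inv_pos.2 hρ)) hbound


theorem exists_far_small {Wsp : Type*} [NormedAddCommGroup Wsp] [NormedSpace ℂ Wsp]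
    (S : Y →L[ℂ] Wsp) (V E : Submodule ℂ Y)
    (hsmall : ∀ V' : Submodule ℂ Y, V' ≤ V → IsClosed ((V' : Set Y)) →
      ¬ FiniteDimensional ℂ V' → ∀ η > 0, ∃ x ∈ V', ‖x‖ = 1 ∧ ‖S x‖ < η)
    (hVc : IsClosed (V : Set Y)) (hVi : ¬ FiniteDimensional ℂ V)
    (hEfin : FiniteDimensional ℂ E) :
    ∃ ρ > 0, ∀ η > 0, ∃ x ∈ V, ‖x‖ = 1 ∧ ‖S x‖ < η ∧ ∀ e ∈ E, ρ ≤ ‖x - e‖ := by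
  classical
  -- coordinate functionals of E, extended to Y
  set b := Module.finBasis ℂ ↥E with hb
  have hext : ∀ i, ∃ gi : Y →L[ℂ] ℂ, ∀ p : ↥E, gi p = (LinearMap.toContinuousLinearMap (b.coord i)) p := by
    intro i
    obtain ⟨gi, hgi, -⟩ := exists_extension_norm_eq (E : Subspace ℂ Y)
      (LinearMap.toContinuousLinearMap (b.coord i))
    exact ⟨gi, hgi⟩
  choose g hg using hext
  set V'' : Submodule ℂ Y := V ⊓ Finset.univ.inf fun i => LinearMap.ker (g i : Y →ₗ[ℂ] ℂ) with hV''
  obtain ⟨hV''i, hV''c⟩ := infdim_inf_kers V hVi hVc Finset.univ g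
  have hV''le : V'' ≤ V := inf_le_left
  have hV''E : ∀ x : Y, x ∈ V'' → x ∈ E → x = 0 := by
    intro x hx hxE
    set xe : ↥E := ⟨x, hxE⟩ with hxe
    have hrep : ∀ i, b.repr xe i = 0 := by
      intro i
      have h1 : g i x = 0 := by
        have h0 : x ∈ Finset.univ.inf fun i => LinearMap.ker (g i : Y →ₗ[ℂ] ℂ) := hx.2
        exact Submodule.mem_finsetInf.mp h0 i (Finset.mem_univ i)
      have h2 := hg i xe
      rw [show ((xe : Y)) = x from rfl, h1] at h2
      have hthis : (b.coord i) xe = 0 := h2.symm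
      rwa [Module.Basis.coord_apply] at hthis
    have : b.repr xe = 0 := Finsupp.ext hrep
    have hxe0 : xe = 0 := by
      have := b.repr.map_eq_zero_iff.1 this
      exact this
    rw [show x = (xe : Y) from rfl, hxe0]
    rfl
  -- main claim with V''
  have claim : ∃ ρ > 0, ∀ η > 0, ∃ x ∈ V'', ‖x‖ = 1 ∧ ‖S x‖ < η ∧ ∀ e ∈ E, ρ ≤ ‖x - e‖ := by
    by_contra hcon
    push_neg at hcon
    have hstep : ∀ k : ℕ, ∃ x ∈ V'', ‖x‖ = 1 ∧ ‖S x‖ < 1 / (k + 1 : ℝ) ∧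
        ∃ e ∈ E, ‖x - e‖ < 1 / (k + 1 : ℝ) := by
      intro k
      have hkpos : (0:ℝ) < 1 / (k + 1 : ℝ) := by positivity
      obtain ⟨η, hηpos, hη⟩ := hcon (1 / (k + 1 : ℝ)) hkpos
      obtain ⟨x, hxV, hx1, hxS⟩ := hsmall V'' hV''le hV''c hV''i
        (min η (1 / (k + 1 : ℝ))) (lt_min hηpos hkpos)
      refine ⟨x, hxV, hx1, lt_of_lt_of_le hxS (min_le_right _ _), ?_⟩
      exact hη x hxV hx1 (lt_of_lt_of_le hxS (min_le_left _ _))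
    choose x hxV hx1 hxS e heE hxe using hstep
    have hebd : ∀ k, ‖e k‖ ≤ 2 := by
      intro k
      have h1 : ‖e k‖ ≤ ‖x k‖ + ‖x k - e k‖ := by
        calc ‖e k‖ = ‖x k - (x k - e k)‖ := by rw [sub_sub_cancel]
          _ ≤ ‖x k‖ + ‖x k - e k‖ := norm_sub_le _ _
      have h2 : 1 / ((k:ℝ) + 1) ≤ 1 := by
        rw [div_le_one (by positivity)]
        linarith [Nat.cast_nonneg (α := ℝ) k]
      rw [hx1 k] at h1
      linarith [hxe k]
    haveI := hEfin
    haveI : ProperSpace ↥E := FiniteDimensional.proper ℂ ↥E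
    set ee : ℕ → ↥E := fun k => ⟨e k, heE k⟩ with hee
    obtain ⟨a, -, φ, hφmono, hφtendsto⟩ := tendsto_subseq_of_bounded
      (isBounded_closedBall (x := (0 : ↥E)) (r := 2))
      (x := ee) (fun k => by
        rw [mem_closedBall_zero_iff]
        exact hebd k)
    have h1 : Tendsto (fun j => ((ee (φ j) : Y))) atTop (𝓝 (a : Y)) :=
      ((continuous_subtype_val.tendsto a).comp hφtendsto : _)
    have h2 : Tendsto (fun j => x (φ j) - e (φ j)) atTop (𝓝 0) := by
      have hbd : ∀ j : ℕ, ‖x (φ j) - e (φ j)‖ ≤ 1 / ((j:ℝ) + 1) := by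
        intro j
        have h3 : (1:ℝ) / ((φ j : ℝ) + 1) ≤ 1 / ((j:ℝ) + 1) := by
          apply one_div_le_one_div_of_le (by positivity)
          have h4 : j ≤ φ j := hφmono.le_apply
          have h5 : (j:ℝ) ≤ (φ j : ℝ) := by exact_mod_cast h4
          linarith
        exact le_trans (le_of_lt (hxe (φ j))) h3
      exact squeeze_zero_norm hbd tendsto_one_div_add_atTop_nhds_zero_nat
    have hYlim : Tendsto (fun j => x (φ j)) atTop (𝓝 (a : Y)) := by
      have := h2.add h1
      rw [zero_add] at this
      have heq : (fun j => x (φ j)) = fun j => (x (φ j) - e (φ j)) + ((ee (φ j) : Y)) := by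
        funext j
        rw [show ((ee (φ j) : Y)) = e (φ j) from rfl]
        abel
      rw [heq]
      exact this
    have haV : (a : Y) ∈ V'' := hV''c.mem_of_tendsto hYlim
      (Eventually.of_forall fun j => hxV (φ j))
    have ha1 : ‖(a : Y)‖ = 1 := by
      have hn : Tendsto (fun j => ‖x (φ j)‖) atTop (𝓝 ‖(a : Y)‖) := hYlim.norm
      have hc : Tendsto (fun j => ‖x (φ j)‖) atTop (𝓝 1) := by
        simp only [hx1]
        exact tendsto_const_nhds
      exact tendsto_nhds_unique hn hc
    have := hV''E (a : Y) haV a.2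
    rw [this, norm_zero] at ha1
    exact zero_ne_one ha1
  obtain ⟨ρ, hρ, hcl⟩ := claim
  refine ⟨ρ, hρ, fun η hη => ?_⟩
  obtain ⟨xx, hxx, h1, h2, h3⟩ := hcl η hη
  exact ⟨xx, hV''le hxx, h1, h2, h3⟩


theorem exists_small_subspace {Wsp : Type*} [NormedAddCommGroup Wsp] [NormedSpace ℂ Wsp]
    (S : Y →L[ℂ] Wsp) (Z : Submodule ℂ Y) (hZc : IsClosed (Z : Set Y))
    (hZi : ¬ FiniteDimensional ℂ Z)
    (hsmall : ∀ V' : Submodule ℂ Y, V' ≤ Z → IsClosed ((V' : Set Y)) →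
      ¬ FiniteDimensional ℂ V' → ∀ η > 0, ∃ x ∈ V', ‖x‖ = 1 ∧ ‖S x‖ < η)
    {δ : ℝ} (hδ : 0 < δ) :
    ∃ N : Submodule ℂ Y, IsClosed (N : Set Y) ∧ (¬ FiniteDimensional ℂ N) ∧
      ∀ x ∈ N, ‖S x‖ ≤ 2 * δ * ‖x‖ := by
  classical
  set α := Y × (Y →L[ℂ] ℂ) × ℕ with hα
  set P : α → Prop := fun t => t.1 ∈ Z ∧ ‖t.1‖ = 1 ∧ t.2.1 t.1 = 1 ∧
    ‖t.2.1‖ * ‖S t.1‖ ≤ δ * (1/2 : ℝ)^t.2.2 with hP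
  set r : α → α → Prop := fun t t' => t.2.2 < t'.2.2 ∧ t.2.1 t'.1 = 0 ∧ t'.2.1 t.1 = 0 with hr
  have hstep : ∀ s : Finset α, (∀ t ∈ s, P t) → ∃ y, P y ∧ ∀ t ∈ s, r t y := by
    intro s _
    set V : Submodule ℂ Y := Z ⊓ s.inf fun t => LinearMap.ker (t.2.1 : Y →ₗ[ℂ] ℂ) with hV
    obtain ⟨hVi, hVc⟩ := infdim_inf_kers Z hZi hZc s (fun t => t.2.1)
    have hVle : V ≤ Z := inf_le_left
    set E : Submodule ℂ Y := Submodule.span ℂ (Prod.fst '' (s : Set α)) with hE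
    haveI hEfin : FiniteDimensional ℂ ↥E :=
      Module.Finite.span_of_finite ℂ (s.finite_toSet.image _)
    have hEc : IsClosed (E : Set Y) := Submodule.closed_of_finiteDimensional E
    have hsmall' : ∀ V' : Submodule ℂ Y, V' ≤ V → IsClosed ((V' : Set Y)) →
        ¬ FiniteDimensional ℂ V' → ∀ η > 0, ∃ x ∈ V', ‖x‖ = 1 ∧ ‖S x‖ < η :=
      fun V' hle => hsmall V' (hle.trans hVle)
    obtain ⟨ρ, hρ, hfar⟩ := exists_far_small S V E hsmall' hVc hVi hEfin
    set n' : ℕ := (s.sup fun t => t.2.2) + 1 with hn'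
    have hηpos : 0 < ρ * (δ * (1/2 : ℝ)^n') := by positivity
    obtain ⟨x, hxV, hx1, hxS, hxfar⟩ := hfar (ρ * (δ * (1/2 : ℝ)^n')) hηpos
    obtain ⟨f, hf1, hf0, hfn⟩ := exists_functional E hEc x hρ hxfar
    refine ⟨(x, f, n'), ⟨hVle hxV, hx1, hf1, ?_⟩, ?_⟩
    · have h1 : ‖f‖ * ‖S x‖ ≤ ρ⁻¹ * (ρ * (δ * (1/2 : ℝ)^n')) := by
        apply mul_le_mul hfn (le_of_lt hxS) (norm_nonneg _) (le_of_lt (inv_pos.2 hρ))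
      calc ‖f‖ * ‖S x‖ ≤ ρ⁻¹ * (ρ * (δ * (1/2 : ℝ)^n')) := h1
        _ = δ * (1/2 : ℝ)^n' := by field_simp
    · intro t ht
      refine ⟨Nat.lt_succ_of_le (Finset.le_sup (f := fun t : α => t.2.2) ht), ?_, ?_⟩
      · have h0 : x ∈ s.inf fun t => LinearMap.ker (t.2.1 : Y →ₗ[ℂ] ℂ) := hxV.2
        exact Submodule.mem_finsetInf.mp h0 t ht
      · exact hf0 t.1 (Submodule.subset_span ⟨t, ht, rfl⟩)
  obtain ⟨q, hqP, hqr⟩ := exists_seq_of_forall_finset_exists P r hstep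
  set z : ℕ → Y := fun k => (q k).1 with hz
  set ff : ℕ → Y →L[ℂ] ℂ := fun k => (q k).2.1 with hff
  set nn : ℕ → ℕ := fun k => (q k).2.2 with hnn
  have hnmono : StrictMono nn := fun m n h => (hqr m n h).1
  have hbio : ∀ j k : ℕ, ff j (z k) = if j = k then 1 else 0 := by
    intro j k
    rcases lt_trichotomy j k with h | h | h
    · rw [if_neg (Nat.ne_of_lt h)]
      exact (hqr j k h).2.1
    · rw [if_pos h, h]
      exact (hqP k).2.2.1
    · rw [if_neg (Nat.ne_of_gt h)]
      exact (hqr k j h).2.2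
  have hcoef : ∀ (c : ℕ →₀ ℂ) (j : ℕ), ff j (c.sum fun i a => a • z i) = c j := by
    intro c j
    rw [map_finsuppSum]
    have hterm : ∀ i ∈ c.support, ff j (c i • z i) = if i = j then c i else 0 := by
      intro i _
      rw [map_smul, hbio j i]
      by_cases h : i = j
      · subst h
        rw [if_pos rfl, if_pos rfl]
        simp
      · rw [if_neg (fun hh => h hh.symm), if_neg h]
        simp
    rw [Finsupp.sum, Finset.sum_congr rfl hterm, Finset.sum_ite_eq' c.support j (fun i => c i)]
    by_cases h : j ∈ c.support
    · rw [if_pos h]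
    · rw [if_neg h]
      exact (Finsupp.notMem_support_iff.1 h).symm
  have hspan : ∀ x ∈ Submodule.span ℂ (Set.range z), ‖S x‖ ≤ 2 * δ * ‖x‖ := by
    intro x hx
    obtain ⟨c, rfl⟩ := Finsupp.mem_span_range_iff_exists_finsupp.1 hx
    set xx : Y := c.sum fun i a => a • z i with hxx
    have hSx : S xx = ∑ i ∈ c.support, c i • S (z i) := by
      rw [hxx, map_finsuppSum, Finsupp.sum]
      exact Finset.sum_congr rfl fun i _ => map_smul S (c i) (z i)
    have hterm : ∀ i ∈ c.support, ‖c i • S (z i)‖ ≤ (δ * (1/2 : ℝ)^i) * ‖xx‖ := by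
      intro i _
      have h1 : ‖c i‖ ≤ ‖ff i‖ * ‖xx‖ := by
        rw [← hcoef c i]
        exact (ff i).le_opNorm xx
      have h2 : ‖ff i‖ * ‖S (z i)‖ ≤ δ * (1/2 : ℝ)^(nn i) := (hqP i).2.2.2
      have h3 : (1/2 : ℝ)^(nn i) ≤ (1/2 : ℝ)^i :=
        pow_le_pow_of_le_one (by norm_num) (by norm_num) hnmono.le_apply
      calc ‖c i • S (z i)‖ = ‖c i‖ * ‖S (z i)‖ := norm_smul _ _
        _ ≤ (‖ff i‖ * ‖xx‖) * ‖S (z i)‖ :=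
            mul_le_mul_of_nonneg_right h1 (norm_nonneg _)
        _ = (‖ff i‖ * ‖S (z i)‖) * ‖xx‖ := by ring
        _ ≤ (δ * (1/2 : ℝ)^(nn i)) * ‖xx‖ :=
            mul_le_mul_of_nonneg_right h2 (norm_nonneg _)
        _ ≤ (δ * (1/2 : ℝ)^i) * ‖xx‖ := by
            apply mul_le_mul_of_nonneg_right _ (norm_nonneg _)
            exact mul_le_mul_of_nonneg_left h3 (le_of_lt hδ)
    have hsum : (∑ i ∈ c.support, δ * (1/2 : ℝ)^i) ≤ 2 * δ := by
      rw [← Finset.mul_sum]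
      have hsub : c.support ⊆ Finset.range ((c.support.sup id) + 1) := by
        intro i hi
        rw [Finset.mem_range]
        exact Nat.lt_succ_of_le (Finset.le_sup (f := id) hi)
      have h4 : (∑ i ∈ c.support, (1/2 : ℝ)^i) ≤
          ∑ i ∈ Finset.range ((c.support.sup id) + 1), (1/2 : ℝ)^i :=
        Finset.sum_le_sum_of_subset_of_nonneg hsub (fun i _ _ => by positivity)
      have h5 := sum_geometric_two_le ((c.support.sup id) + 1)
      calc δ * (∑ i ∈ c.support, (1/2 : ℝ)^i) ≤ δ * 2 :=
            mul_le_mul_of_nonneg_left (h4.trans h5) (le_of_lt hδ)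
        _ = 2 * δ := by ring
    calc ‖S xx‖ = ‖∑ i ∈ c.support, c i • S (z i)‖ := by rw [hSx]
      _ ≤ ∑ i ∈ c.support, ‖c i • S (z i)‖ := norm_sum_le _ _
      _ ≤ ∑ i ∈ c.support, (δ * (1/2 : ℝ)^i) * ‖xx‖ := Finset.sum_le_sum hterm
      _ = (∑ i ∈ c.support, δ * (1/2 : ℝ)^i) * ‖xx‖ := (Finset.sum_mul _ _ _).symm
      _ ≤ (2 * δ) * ‖xx‖ := mul_le_mul_of_nonneg_right hsum (norm_nonneg _)
      _ = 2 * δ * ‖xx‖ := by ring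
  refine ⟨(Submodule.span ℂ (Set.range z)).topologicalClosure,
    (Submodule.span ℂ (Set.range z)).isClosed_topologicalClosure, ?_, ?_⟩
  · intro hfin
    have hind : LinearIndependent ℂ z := by
      rw [linearIndependent_iff]
      intro l hl
      ext j
      have := hcoef l j
      rw [show (l.sum fun i a => a • z i) = Finsupp.linearCombination ℂ z l from
        (Finsupp.linearCombination_apply ℂ l).symm, hl, map_zero] at this
      exact this.symm
    set N := (Submodule.span ℂ (Set.range z)).topologicalClosure with hN
    have hmem : ∀ i, z i ∈ N :=
      fun i => (Submodule.span ℂ (Set.range z)).le_topologicalClosure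
        (Submodule.subset_span ⟨i, rfl⟩)
    set w : ℕ → ↥N := fun i => ⟨z i, hmem i⟩ with hw
    have hindw : LinearIndependent ℂ w := by
      apply LinearIndependent.of_comp N.subtype
      exact hind
    have h1 : Cardinal.aleph0 ≤ Module.rank ℂ ↥N := hindw.aleph0_le_rank
    have h2 : Module.rank ℂ ↥N < Cardinal.aleph0 := Module.rank_lt_aleph0_iff.2 hfin
    exact absurd h1 (not_le.2 h2)
  · intro x hx
    have hxcl : x ∈ closure ((Submodule.span ℂ (Set.range z)) : Set Y) := by
      rwa [← Submodule.topologicalClosure_coe]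
    have hCc : IsClosed {y : Y | ‖S y‖ ≤ 2 * δ * ‖y‖} :=
      isClosed_le (S.continuous.norm) ((continuous_const.mul continuous_norm))
    exact closure_minimal hspan hCc hxcl

end SS0

theorem statement0 {Y W : Type*} [NormedAddCommGroup Y] [NormedSpace ℂ Y] [CompleteSpace Y]
    [NormedAddCommGroup W] [NormedSpace ℂ W] [CompleteSpace W]
    (hY : HI Y) (S : Y →L[ℂ] W) (Z : Submodule ℂ Y) (hZ : IsInfDimClosed Z)
    (hres : StrictlySingular (S.comp Z.subtypeL)) : StrictlySingular S := by
  obtain ⟨hZc, hZi⟩ := hZ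
  have hsmall : ∀ V' : Submodule ℂ Y, V' ≤ Z → IsClosed ((V' : Set Y)) →
      ¬ FiniteDimensional ℂ V' → ∀ η > 0, ∃ x ∈ V', ‖x‖ = 1 ∧ ‖S x‖ < η := by
    intro V' hle hc hinf η hη
    have hVzc : IsClosed ((V'.comap Z.subtype : Submodule ℂ ↥Z) : Set ↥Z) := by
      have heq : ((V'.comap Z.subtype : Submodule ℂ ↥Z) : Set ↥Z) =
          (Subtype.val) ⁻¹' (V' : Set Y) := rfl
      rw [heq]
      exact hc.preimage continuous_subtype_val
    have hVzi : ¬ FiniteDimensional ℂ ↥(V'.comap Z.subtype) := by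
      intro h
      exact hinf ((Submodule.comapSubtypeEquivOfLe hle).finiteDimensional)
    obtain ⟨xz, hxz, hxlt⟩ := hres (V'.comap Z.subtype) ⟨hVzc, hVzi⟩ η hη
    have hSx : (S.comp Z.subtypeL) xz = S (xz : Y) := rfl
    have hnz : ‖xz‖ = ‖(xz : Y)‖ := rfl
    rw [hSx, hnz] at hxlt
    have hxpos : 0 < ‖(xz : Y)‖ := by
      by_contra hcon
      push_neg at hcon
      have h0 : ‖(xz : Y)‖ = 0 := le_antisymm hcon (norm_nonneg _)
      rw [h0, mul_zero] at hxlt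
      exact absurd hxlt (not_lt.2 (norm_nonneg _))
    refine ⟨(‖(xz : Y)‖ : ℂ)⁻¹ • (xz : Y), Submodule.smul_mem V' _ hxz, ?_, ?_⟩
    · exact norm_smul_inv_norm (fun h => by rw [h, norm_zero] at hxpos; exact lt_irrefl 0 hxpos)
    · rw [map_smul]
      rw [norm_smul]
      have h1 : ‖((‖(xz : Y)‖ : ℂ))⁻¹‖ = ‖(xz : Y)‖⁻¹ := by
        rw [norm_inv, Complex.norm_real, Real.norm_eq_abs, abs_of_pos hxpos]
      rw [h1]
      calc ‖(xz : Y)‖⁻¹ * ‖S (xz : Y)‖ < ‖(xz : Y)‖⁻¹ * (η * ‖(xz : Y)‖) :=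
            mul_lt_mul_of_pos_left hxlt (inv_pos.2 hxpos)
        _ = η := by field_simp
  intro M hM c hc
  obtain ⟨N, hNc, hNi, hNb⟩ := SS0.exists_small_subspace S Z hZc hZi hsmall
    (δ := c/8) (by positivity)
  have hNb' : ∀ x ∈ N, ‖S x‖ ≤ (c/4) * ‖x‖ := by
    intro x hx
    have h := hNb x hx
    have : 2 * (c/8) = c/4 := by ring
    rwa [this] at h
  set ε : ℝ := c / (2 * (‖S‖ + 1)) with hε
  have hSpos : (0:ℝ) < ‖S‖ + 1 := by positivity
  have hεpos : 0 < ε := by positivity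
  obtain ⟨u, hu, v, hv, hu1, hv1, huv⟩ := hY M N hM ⟨hNc, hNi⟩ ε hεpos
  refine ⟨u, hu, ?_⟩
  have hsplit : S u = S (u - v) + S v := by rw [map_sub]; abel
  have h1 : ‖S u‖ ≤ ‖S (u - v)‖ + ‖S v‖ := by
    rw [hsplit]
    exact norm_add_le _ _
  have h2 : ‖S (u - v)‖ ≤ ‖S‖ * ε :=
    le_trans (S.le_opNorm _) (mul_le_mul_of_nonneg_left huv (norm_nonneg S))
  have h3 : ‖S v‖ ≤ c/4 := by
    have h := hNb' v hv
    rwa [hv1, mul_one] at h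
  have h4 : ‖S‖ * ε ≤ c/2 := by
    have h5 : ‖S‖ * ε ≤ (‖S‖ + 1) * ε :=
      mul_le_mul_of_nonneg_right (by linarith) (le_of_lt hεpos)
    have h6 : (‖S‖ + 1) * ε = c/2 := by
      rw [hε]
      field_simp
    linarith
  rw [hu1, mul_one]
  linarith
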